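/- The function G_{z,α,ν} is differentiable on ℝ with a Lipschitz continuous derivative G′_{z,α,ν} that satisfies inf_{x∈ℝ} G′_{z,α,ν}(x) > 0; in particular, G_{z,α,ν} has an inverse G_{z,α,ν}^{−1}: ℝ → ℝ that is Lipschitz continuous. (Lemma 4.1(i).) -/

import Mathlib

open MeasureTheory ProbabilityTheory Filter Set
open scoped ENNReal NNReal

noncomputable section

namespace AdaptiveQM

/-- The open interval `(ξ_{i-1}, ξ_i)` (with `ξ₀ = -∞`, `ξ_{k+1} = ∞`) determined by the
strictly increasing family `ξ : Fin k → ℝ`. -/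
def piece {k : ℕ} (ξ : Fin k → ℝ) (i : Fin (k + 1)) : Set ℝ :=
  {x | (∀ j : Fin k, (j : ℕ) < (i : ℕ) → ξ j < x) ∧ ∀ j : Fin k, (i : ℕ) ≤ (j : ℕ) → x < ξ j}

/-- Assumption (μ1)/(σ piecewise Lipschitz): Lipschitz continuity on each interval
`(ξ_{i-1}, ξ_i)`. -/
def PiecewiseLipschitz {k : ℕ} (ξ : Fin k → ℝ) (f : ℝ → ℝ) : Prop :=
  ∀ i : Fin (k + 1), ∃ L : ℝ≥0, LipschitzOnWith L f (piece ξ i)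

/-- Assumptions (μ2)/(σ2): `f` has a Lipschitz continuous derivative on each interval
`(ξ_{i-1}, ξ_i)`. -/
def PiecewiseC1Lipschitz {k : ℕ} (ξ : Fin k → ℝ) (f : ℝ → ℝ) : Prop :=
  ∀ i : Fin (k + 1), ∃ (f' : ℝ → ℝ) (L : ℝ≥0),
    (∀ x ∈ piece ξ i, HasDerivAt f (f' x) x) ∧ LipschitzOnWith L f' (piece ξ i)

/-- `W` is a one-dimensional Brownian motion on `(Ω, F, P)`. -/
structure IsBrownianMotion {Ω : Type*} [MeasurableSpace Ω] (P : Measure Ω)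
    (W : ℝ → Ω → ℝ) : Prop where
  meas : ∀ t, Measurable (W t)
  init : ∀ᵐ ω ∂P, W 0 ω = 0
  cont : ∀ᵐ ω ∂P, Continuous fun t => W t ω
  gauss : ∀ s t : ℝ, 0 ≤ s → s ≤ t →
    P.map (fun ω => W t ω - W s ω) = gaussianReal 0 (Real.toNNReal (t - s))
  indep : ∀ (n : ℕ) (t : Fin (n + 1) → ℝ), Monotone t → (∀ i, 0 ≤ t i) →
    iIndepFun (m := fun _ : Fin n => (inferInstance : MeasurableSpace ℝ))
      (fun i ω => W (t i.succ) ω - W (t i.castSucc) ω) P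

/-- `ε₁^δ = √δ · log²(1/δ)`. -/
def eps1 (δ : ℝ) : ℝ := Real.sqrt δ * (Real.log (1 / δ)) ^ 2

/-- `ε₂^δ = δ · log⁴(1/δ)`. -/
def eps2 (δ : ℝ) : ℝ := δ * (Real.log (1 / δ)) ^ 4

/-- The adaptive step-size function `h^δ`. -/
def stepSize (Θ : Set ℝ) (δ x : ℝ) : ℝ :=
  if Metric.infDist x Θ < eps2 δ then δ ^ 2 * (Real.log (1 / δ)) ^ 4
  else if Metric.infDist x Θ < eps1 δ then (Metric.infDist x Θ / (Real.log (1 / δ)) ^ 2) ^ 2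
  else δ

/-- One quasi-Milstein step: value at time `t` started from value `y` at time `u`, driven by
the path `w`.  Note `deriv s y = s'(y)` if `s` is differentiable at `y` and `0` otherwise. -/
def milsteinStep (b s : ℝ → ℝ) (y u t : ℝ) (w : ℝ → ℝ) : ℝ :=
  y + b y * (t - u) + s y * (w t - w u)
    + (1 / 2) * (s y * deriv s y) * ((w t - w u) ^ 2 - (t - u))

variable {Ω : Type*}

/-- The grid of the adaptive quasi-Milstein scheme: `grid b s Θ x₀ W δ i ω = (τ_i^δ(ω), X̂^δ_{τ_i^δ}(ω))`. -/
def grid (b s : ℝ → ℝ) (Θ : Set ℝ) (x₀ : ℝ) (W : ℝ → Ω → ℝ) (δ : ℝ) :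
    ℕ → Ω → ℝ × ℝ
  | 0 => fun _ => (0, x₀)
  | i + 1 => fun ω =>
      let p := grid b s Θ x₀ W δ i ω
      let t' := p.1 + stepSize Θ δ p.2
      (t', milsteinStep b s p.2 p.1 t' fun u => W u ω)

/-- `τ_i^δ`. -/
def gridTime (b s : ℝ → ℝ) (Θ : Set ℝ) (x₀ : ℝ) (W : ℝ → Ω → ℝ) (δ : ℝ) (i : ℕ) (ω : Ω) : ℝ :=
  (grid b s Θ x₀ W δ i ω).1

/-- `X̂^δ_{τ_i^δ}`. -/
def gridVal (b s : ℝ → ℝ) (Θ : Set ℝ) (x₀ : ℝ) (W : ℝ → Ω → ℝ) (δ : ℝ) (i : ℕ) (ω : Ω) : ℝ :=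
  (grid b s Θ x₀ W δ i ω).2

/-- The largest index `i` with `τ_i^δ ≤ t`. -/
def lastIdx (b s : ℝ → ℝ) (Θ : Set ℝ) (x₀ : ℝ) (W : ℝ → Ω → ℝ) (δ t : ℝ) (ω : Ω) : ℕ :=
  sSup {i : ℕ | gridTime b s Θ x₀ W δ i ω ≤ t}

/-- `t̲^δ = max{τ_i^δ : τ_i^δ ≤ t}`. -/
def lastTime (b s : ℝ → ℝ) (Θ : Set ℝ) (x₀ : ℝ) (W : ℝ → Ω → ℝ) (δ t : ℝ) (ω : Ω) : ℝ :=
  gridTime b s Θ x₀ W δ (lastIdx b s Θ x₀ W δ t ω) ω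

/-- `X̂^δ_{t̲^δ}`. -/
def lastVal (b s : ℝ → ℝ) (Θ : Set ℝ) (x₀ : ℝ) (W : ℝ → Ω → ℝ) (δ t : ℝ) (ω : Ω) : ℝ :=
  gridVal b s Θ x₀ W δ (lastIdx b s Θ x₀ W δ t ω) ω

/-- The time-continuous adaptive quasi-Milstein scheme `X̂^δ_t`. -/
def scheme (b s : ℝ → ℝ) (Θ : Set ℝ) (x₀ : ℝ) (W : ℝ → Ω → ℝ) (δ t : ℝ) (ω : Ω) : ℝ :=
  milsteinStep b s (lastVal b s Θ x₀ W δ t ω) (lastTime b s Θ x₀ W δ t ω) t fun u => W u ω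

/-- `N(X̂^δ_1) = min{i ∈ ℕ : τ_i^δ ≥ 1}`, the number of evaluations of `W`. -/
def numSteps (b s : ℝ → ℝ) (Θ : Set ℝ) (x₀ : ℝ) (W : ℝ → Ω → ℝ) (δ : ℝ) (ω : Ω) : ℕ :=
  sInf {i : ℕ | 1 ≤ gridTime b s Θ x₀ W δ i ω}

/-- The augmented filtration `F_t = σ(σ(W_s : 0 ≤ s ≤ t) ∪ N)` generated by `W`. -/
def augFilt [MeasurableSpace Ω] (P : Measure Ω) (W : ℝ → Ω → ℝ) (t : ℝ) :
    MeasurableSpace Ω :=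
  (⨆ s ∈ Set.Icc (0 : ℝ) t, MeasurableSpace.comap (W s) inferInstance) ⊔
    MeasurableSpace.generateFrom {A | MeasurableSet A ∧ P A = 0}

/-- `τ` is a stopping time with respect to the augmented Brownian filtration. -/
def IsAugStoppingTime [MeasurableSpace Ω] (P : Measure Ω) (W : ℝ → Ω → ℝ) (τ : Ω → ℝ) :
    Prop :=
  ∀ t : ℝ, MeasurableSet[augFilt P W t] {ω | τ ω ≤ t}

/-- The σ-algebra `F_τ` of the `τ`-past. -/
def stoppedSigma [MeasurableSpace Ω] (P : Measure Ω) (W : ℝ → Ω → ℝ) (τ : Ω → ℝ) :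
    MeasurableSpace Ω :=
  MeasurableSpace.generateFrom
    {A | MeasurableSet A ∧ ∀ t : ℝ, MeasurableSet[augFilt P W t] (A ∩ {ω | τ ω ≤ t})}

/-- The shifted process `W^τ_t = W_{τ+t} - W_τ`. -/
def shiftedBM (W : ℝ → Ω → ℝ) (τ : Ω → ℝ) : ℝ → Ω → ℝ :=
  fun t ω => W (τ ω + t) ω - W (τ ω) ω

/-- Left-point Riemann sums for the Itô integral `∫₀ᵗ H dW` along dyadic partitions. -/
def riemannSum (H : ℝ → Ω → ℝ) (W : ℝ → Ω → ℝ) (t : ℝ) (n : ℕ) (ω : Ω) : ℝ :=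
  ∑ i ∈ Finset.range (2 ^ n),
    H (t * i / 2 ^ n) ω * (W (t * (i + 1) / 2 ^ n) ω - W (t * i / 2 ^ n) ω)

/-- `X` is a strong solution of `dX_t = b(X_t) dt + s(X_t) dW_t`, `X₀ = x₀`: it is adapted to
the Brownian motion, has continuous paths, and satisfies the integral equation, the stochastic
integral being the limit in probability of left-point Riemann sums. -/
def IsStrongSolution [MeasurableSpace Ω] (P : Measure Ω) (W : ℝ → Ω → ℝ)
    (b s : ℝ → ℝ) (x₀ : ℝ) (X : ℝ → Ω → ℝ) : Prop :=
  (∀ t, Measurable (X t)) ∧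
  (∀ᵐ ω ∂P, Continuous fun t => X t ω) ∧
  (∀ᵐ ω ∂P, X 0 ω = x₀) ∧
  (∀ t : ℝ, 0 ≤ t → ∃ g : (ℝ → ℝ) → ℝ, Measurable g ∧
    ∀ᵐ ω ∂P, X t ω = g fun u => W (min u t) ω) ∧
  (∀ t : ℝ, 0 ≤ t →
    TendstoInMeasure P (fun n ω => riemannSum (fun u ω' => s (X u ω')) W t n ω) atTop
      fun ω => X t ω - x₀ - ∫ u in (0 : ℝ)..t, b (X u ω))

/-- The bump function `φ(x) = (1-x²)⁴ · 1_{[-1,1]}(x)`. -/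
def phiBump (x : ℝ) : ℝ := if x ∈ Set.Icc (-1 : ℝ) 1 then (1 - x ^ 2) ^ 4 else 0

/-- `ρ_{z,α}`, with the convention `1/0 = ∞`. -/
def rho {k : ℕ} (z α : Fin k → ℝ) : ℝ≥0∞ :=
  (⨅ i : Fin k, if α i = 0 then ⊤ else ENNReal.ofReal (1 / (8 * |α i|))) ⊓
    ⨅ i : Fin k, ⨅ j : Fin k,
      if (i : ℕ) + 1 = (j : ℕ) then ENNReal.ofReal ((z j - z i) / 2) else ⊤

/-- The transformation `G_{z,α,ν}`. -/
def Gmap {k : ℕ} (z α : Fin k → ℝ) (ν : ℝ) (x : ℝ) : ℝ :=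
  x + ∑ i : Fin k, α i * (x - z i) * |x - z i| * phiBump ((x - z i) / ν)

/-- The inverse `G_{z,α,ν}^{-1}`. -/
def Ginv {k : ℕ} (z α : Fin k → ℝ) (ν : ℝ) : ℝ → ℝ := Function.invFun (Gmap z α ν)

/-- `α_i = (μ(ξ_i-) - μ(ξ_i+)) / (2σ²(ξ_i))`. -/
def alphaCoef (b s : ℝ → ℝ) {k : ℕ} (ξ : Fin k → ℝ) (i : Fin k) : ℝ :=
  (Function.leftLim b (ξ i) - Function.rightLim b (ξ i)) / (2 * (s (ξ i)) ^ 2)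

open Classical in
/-- `G''_{ξ,α,ν}` extended to all of `ℝ` by
`G''(ξ_i) = 2α_i + 2(μ(ξ_i+) - μ(ξ_i))/σ²(ξ_i)`. -/
def GsecondExt (b s : ℝ → ℝ) {k : ℕ} (ξ : Fin k → ℝ) (ν : ℝ) (x : ℝ) : ℝ :=
  if h : ∃ i, ξ i = x then
    2 * alphaCoef b s ξ h.choose + 2 * (Function.rightLim b x - b x) / (s x) ^ 2
  else deriv (deriv (Gmap ξ (alphaCoef b s ξ) ν)) x

/-- The transformed drift `μ̃ = (G'·μ + ½G''·σ²) ∘ G⁻¹`. -/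
def tildeDrift (b s : ℝ → ℝ) {k : ℕ} (ξ : Fin k → ℝ) (ν : ℝ) (x : ℝ) : ℝ :=
  deriv (Gmap ξ (alphaCoef b s ξ) ν) (Ginv ξ (alphaCoef b s ξ) ν x) *
      b (Ginv ξ (alphaCoef b s ξ) ν x) +
    (1 / 2) * GsecondExt b s ξ ν (Ginv ξ (alphaCoef b s ξ) ν x) *
      (s (Ginv ξ (alphaCoef b s ξ) ν x)) ^ 2

/-- The transformed diffusion coefficient `σ̃ = (G'·σ) ∘ G⁻¹`. -/
def tildeDiff (b s : ℝ → ℝ) {k : ℕ} (ξ : Fin k → ℝ) (ν : ℝ) (x : ℝ) : ℝ :=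
  deriv (Gmap ξ (alphaCoef b s ξ) ν) (Ginv ξ (alphaCoef b s ξ) ν x) *
    s (Ginv ξ (alphaCoef b s ξ) ν x)

/-- The set `S = (⋃ᵢ (ξ_{i-1},ξ_i)²)ᶜ ⊆ ℝ²`. -/
def badSet {k : ℕ} (ξ : Fin k → ℝ) : Set (ℝ × ℝ) :=
  (⋃ i : Fin (k + 1), (piece ξ i) ×ˢ (piece ξ i))ᶜ

/-! ### Auxiliary material for Lemma 4.1(i) -/

section Lemma41Aux

open scoped Topology

lemma phiBump_eq (x : ℝ) : phiBump x = max (1 - x^2) 0 ^ 4 := by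
  unfold phiBump
  by_cases h : x ∈ Set.Icc (-1:ℝ) 1
  · obtain ⟨h1, h2⟩ := h
    rw [if_pos ⟨h1, h2⟩, max_eq_left (by nlinarith)]
  · rw [if_neg h, max_eq_right, zero_pow (by norm_num)]
    simp only [Set.mem_Icc, not_and_or, not_le] at h
    rcases h with h | h <;> nlinarith

lemma hasDerivAt_mul_abs (y : ℝ) : HasDerivAt (fun t : ℝ => t * |t|) (2 * |y|) y := by
  rcases lt_trichotomy y 0 with hy | rfl | hy
  · have H : HasDerivAt (fun t : ℝ => -(t*t)) (2 * |y|) y := by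
      have h := ((hasDerivAt_id y).fun_mul (hasDerivAt_id y)).fun_neg
      refine h.congr_deriv (Eq.symm ?_)
      simp [abs_of_neg hy]; ring
    refine H.congr_of_eventuallyEq ?_
    filter_upwards [Iio_mem_nhds hy] with t ht
    rw [abs_of_neg ht]; ring
  · simp only [abs_zero, mul_zero]
    rw [hasDerivAt_iff_tendsto_slope]
    have h1 : (fun t : ℝ => |t|) =ᶠ[𝓝[≠] (0:ℝ)] slope (fun t : ℝ => t * |t|) 0 := by
      filter_upwards [self_mem_nhdsWithin] with t ht
      simp only [Set.mem_compl_iff, Set.mem_singleton_iff] at ht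
      rw [slope_def_field]
      field_simp
      simp
    refine Tendsto.congr' h1 ?_
    have := (continuous_abs.tendsto (0:ℝ))
    simpa using this.mono_left nhdsWithin_le_nhds
  · have H : HasDerivAt (fun t : ℝ => t*t) (2 * |y|) y := by
      have h := (hasDerivAt_id y).fun_mul (hasDerivAt_id y)
      refine h.congr_deriv (Eq.symm ?_)
      simp [abs_of_pos hy]; ring
    refine H.congr_of_eventuallyEq ?_
    filter_upwards [Ioi_mem_nhds hy] with t ht
    rw [abs_of_pos ht]

lemma hasDerivAt_maxpow (x : ℝ) :
    HasDerivAt (fun t : ℝ => max t 0 ^ 4) (4 * max x 0 ^ 3) x := by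
  have H := (((hasDerivAt_pow 2 x).fun_add (hasDerivAt_mul_abs x)).div_const 2).fun_pow 2
  have hfun : (fun t : ℝ => ((t^2 + t*|t|)/2)^2) = (fun t : ℝ => max t 0 ^ 4) := by
    funext t
    rcases le_or_gt 0 t with h | h
    · rw [max_eq_left h, abs_of_nonneg h]; ring
    · rw [max_eq_right h.le, abs_of_neg h]; ring
  rw [hfun] at H
  refine H.congr_deriv (Eq.symm ?_)
  push_cast
  rcases le_or_gt 0 x with h | h
  · rw [max_eq_left h, abs_of_nonneg h]; norm_num; ring
  · rw [max_eq_right h.le, abs_of_neg h]; norm_num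

/-- The basic bump `y ↦ y|y|φ(y/ν)`. -/
def bfun (ν y : ℝ) : ℝ := y * |y| * phiBump (y / ν)

/-- The derivative of `bfun ν`. -/
def bder (ν y : ℝ) : ℝ :=
  2 * |y| * (max (1 - (y/ν)^2) 0)^4 - 8 * y^2 * |y| / ν^2 * (max (1 - (y/ν)^2) 0)^3

lemma hasDerivAt_bQ {ν : ℝ} (hν : 0 < ν) (y : ℝ) :
    HasDerivAt (fun t : ℝ => max (1 - (t/ν)^2) 0 ^ 4)
      (4 * max (1 - (y/ν)^2) 0 ^ 3 * (-(2*y)/ν^2)) y := by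
  have hinner : HasDerivAt (fun t : ℝ => 1 - (t/ν)^2) (-(2*y)/ν^2) y := by
    have h1 : HasDerivAt (fun t : ℝ => t/ν) (1/ν) y := (hasDerivAt_id y).div_const ν
    have h2 := (hasDerivAt_const y (1:ℝ)).fun_sub (h1.fun_pow 2)
    refine h2.congr_deriv (Eq.symm ?_)
    push_cast
    ring
  exact (hasDerivAt_maxpow _).comp y hinner

lemma hasDerivAt_bfun {ν : ℝ} (hν : 0 < ν) (y : ℝ) :
    HasDerivAt (bfun ν) (bder ν y) y := by
  have H := (hasDerivAt_mul_abs y).fun_mul (hasDerivAt_bQ hν y)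
  have hfun : (fun t : ℝ => t * |t| * (max (1 - (t/ν)^2) 0 ^ 4)) = bfun ν := by
    funext t; rw [bfun, phiBump_eq]
  rw [hfun] at H
  refine H.congr_deriv (Eq.symm ?_)
  unfold bder
  have hν2 : (ν:ℝ)^2 ≠ 0 := pow_ne_zero 2 hν.ne'
  field_simp
  ring

lemma max_eq_zero_of_ge {ν y : ℝ} (hν : 0 < ν) (h : ν ≤ |y|) : max (1 - (y/ν)^2) 0 = 0 := by
  apply max_eq_right
  have h1 : ν^2 ≤ y^2 := by nlinarith [abs_nonneg y, sq_abs y]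
  have : (1:ℝ) ≤ (y/ν)^2 := by
    rw [div_pow, le_div_iff₀ (by positivity)]
    linarith
  linarith

lemma bder_zero {ν y : ℝ} (hν : 0 < ν) (h : ν ≤ |y|) : bder ν y = 0 := by
  unfold bder
  rw [max_eq_zero_of_ge hν h]
  ring

lemma bder_bound {ν : ℝ} (hν : 0 < ν) (y : ℝ) : |bder ν y| ≤ 8 * ν := by
  rcases le_or_gt ν |y| with h | h
  · rw [bder_zero hν h, abs_zero]; positivity
  · have ht0 : (0:ℝ) ≤ y^2/ν^2 := by positivity
    have ht1 : y^2/ν^2 ≤ 1 := by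
      rw [div_le_one (by positivity)]
      nlinarith [abs_nonneg y, sq_abs y]
    have hQ : max (1 - (y/ν)^2) 0 = 1 - y^2/ν^2 := by
      rw [div_pow]; exact max_eq_left (by linarith)
    have hkey : bder ν y = 2 * |y| * (1 - y^2/ν^2)^3 * (1 - 5*(y^2/ν^2)) := by
      unfold bder
      rw [hQ]
      ring
    rw [hkey]
    generalize hts : y^2/ν^2 = t at ht0 ht1 ⊢
    have ha : (0:ℝ) ≤ |y| := abs_nonneg y
    have h30 : (0:ℝ) ≤ 1 - t := by linarith
    have h3' : (0:ℝ) ≤ (1-t)^3 := by positivity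
    have h3 : (1-t)^3 ≤ 1 := pow_le_one₀ h30 (by linarith)
    rw [abs_le]
    constructor <;>
      nlinarith [mul_nonneg (mul_nonneg ha h3') ht0,
        mul_le_of_le_one_right (mul_nonneg ha h3') ht1,
        mul_le_mul h.le h3 h3' hν.le]

/-- Bounded Lipschitz predicate, with real constants. -/
def BL (f : ℝ → ℝ) : Prop :=
  (∃ K : ℝ, 0 ≤ K ∧ ∀ x y, |f x - f y| ≤ K * |x - y|) ∧ (∃ B : ℝ, ∀ x, |f x| ≤ B)

lemma BL.const (c : ℝ) : BL (fun _ => c) :=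
  ⟨⟨0, le_refl 0, fun x y => by simp⟩, ⟨|c|, fun x => le_refl _⟩⟩

lemma BL.mul {f g : ℝ → ℝ} (hf : BL f) (hg : BL g) : BL (fun x => f x * g x) := by
  obtain ⟨⟨K₁, hK₁, hfl⟩, ⟨B₁, hfb⟩⟩ := hf
  obtain ⟨⟨K₂, hK₂, hgl⟩, ⟨B₂, hgb⟩⟩ := hg
  have hB₁ : 0 ≤ B₁ := le_trans (abs_nonneg _) (hfb 0)
  have hB₂ : 0 ≤ B₂ := le_trans (abs_nonneg _) (hgb 0)
  refine ⟨⟨B₁ * K₂ + B₂ * K₁, by positivity, fun x y => ?_⟩, ⟨B₁ * B₂, fun x => ?_⟩⟩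
  · have h1 : f x * g x - f y * g y = f x * (g x - g y) + g y * (f x - f y) := by ring
    calc |f x * g x - f y * g y| ≤ |f x| * |g x - g y| + |g y| * |f x - f y| := by
          rw [h1]
          exact le_trans (abs_add_le _ _) (by rw [abs_mul, abs_mul])
      _ ≤ B₁ * (K₂ * |x - y|) + B₂ * (K₁ * |x - y|) :=
          add_le_add (mul_le_mul (hfb x) (hgl x y) (abs_nonneg _) hB₁)
            (mul_le_mul (hgb y) (hfl x y) (abs_nonneg _) hB₂)
      _ = (B₁ * K₂ + B₂ * K₁) * |x - y| := by ring
  · show |f x * g x| ≤ B₁ * B₂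
    rw [abs_mul]
    exact mul_le_mul (hfb x) (hgb x) (abs_nonneg _) hB₁

lemma BL.sub {f g : ℝ → ℝ} (hf : BL f) (hg : BL g) : BL (fun x => f x - g x) := by
  obtain ⟨⟨K₁, hK₁, hfl⟩, ⟨B₁, hfb⟩⟩ := hf
  obtain ⟨⟨K₂, hK₂, hgl⟩, ⟨B₂, hgb⟩⟩ := hg
  refine ⟨⟨K₁ + K₂, by positivity, fun x y => ?_⟩, ⟨B₁ + B₂, fun x => ?_⟩⟩
  · have h1 : f x - g x - (f y - g y) = (f x - f y) - (g x - g y) := by ring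
    rw [h1]
    calc |f x - f y - (g x - g y)| ≤ |f x - f y| + |g x - g y| := abs_sub _ _
      _ ≤ K₁ * |x - y| + K₂ * |x - y| := add_le_add (hfl x y) (hgl x y)
      _ = (K₁ + K₂) * |x - y| := by ring
  · exact le_trans (abs_sub _ _) (add_le_add (hfb x) (hgb x))

lemma BL.abs {f : ℝ → ℝ} (hf : BL f) : BL (fun x => |f x|) := by
  obtain ⟨⟨K, hK, hfl⟩, ⟨B, hfb⟩⟩ := hf
  exact ⟨⟨K, hK, fun x y => le_trans (abs_abs_sub_abs_le_abs_sub _ _) (hfl x y)⟩,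
    ⟨B, fun x => by simpa [abs_abs] using hfb x⟩⟩

lemma BL.max0 {f : ℝ → ℝ} (hf : BL f) : BL (fun x => max (f x) 0) := by
  obtain ⟨⟨K, hK, hfl⟩, ⟨B, hfb⟩⟩ := hf
  refine ⟨⟨K, hK, fun x y => le_trans (abs_max_sub_max_le_abs _ _ _) (hfl x y)⟩,
    ⟨B, fun x => ?_⟩⟩
  show |max (f x) 0| ≤ B
  rcases le_or_gt (f x) 0 with h | h
  · rw [max_eq_right h, abs_zero]; exact le_trans (abs_nonneg _) (hfb x)
  · rw [max_eq_left h.le]; exact hfb x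

/-- The clamp function to `[-ν, ν]`. -/
def clampf (ν : ℝ) : ℝ → ℝ := fun y => max (min y ν) (-ν)

lemma BL.clamp {ν : ℝ} (hν : 0 < ν) : BL (clampf ν) := by
  refine ⟨⟨1, zero_le_one, fun x y => ?_⟩, ⟨ν, fun x => ?_⟩⟩
  · rw [one_mul]
    refine le_trans (abs_max_sub_max_le_abs _ _ _) ?_
    refine le_trans (abs_min_sub_min_le_max x ν y ν) ?_
    simp
  · rw [abs_le]
    constructor
    · exact le_max_right _ _
    · exact max_le (min_le_right _ _) (by linarith)

lemma BL.congr {f g : ℝ → ℝ} (h : ∀ x, f x = g x) (hf : BL f) : BL g :=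
  (funext h : f = g) ▸ hf

lemma BL.pow {f : ℝ → ℝ} (hf : BL f) (n : ℕ) : BL (fun x => f x ^ n) := by
  induction n with
  | zero => simpa using BL.const 1
  | succ n ih => simp only [pow_succ]; exact ih.mul hf

lemma bder_eq_clamp {ν : ℝ} (hν : 0 < ν) (y : ℝ) :
    bder ν y = 2 * |clampf ν y| * (max (1 - (clampf ν y/ν)^2) 0)^4
      - 8/ν^2 * |clampf ν y|^3 * (max (1 - (clampf ν y/ν)^2) 0)^3 := by
  rcases le_or_gt |y| ν with h | h
  · obtain ⟨h1, h2⟩ := abs_le.mp h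
    have hcl : clampf ν y = y := by
      unfold clampf
      rw [min_eq_left h2, max_eq_left h1]
    rw [hcl]
    unfold bder
    rw [← sq_abs y]
    ring
  · have hcl2 : (clampf ν y)^2 = ν^2 := by
      unfold clampf
      rcases le_or_gt y 0 with hy | hy
      · rw [min_eq_left (by nlinarith [abs_of_nonpos hy]),
          max_eq_right (by nlinarith [abs_of_nonpos hy])]
        ring
      · rw [min_eq_right (by nlinarith [abs_of_pos hy]), max_eq_left (by linarith)]
    have hQ : max (1 - (clampf ν y/ν)^2) 0 = 0 := by
      rw [div_pow, hcl2, div_self (by positivity)]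
      simp
    rw [bder_zero hν h.le, hQ]
    ring

lemma BL_bder {ν : ℝ} (hν : 0 < ν) : BL (bder ν) := by
  have hcl : BL (clampf ν) := BL.clamp hν
  have hA : BL (fun y => |clampf ν y|) := hcl.abs
  have hdiv : BL (fun y => clampf ν y / ν) := by
    have := hcl.mul (BL.const (1/ν))
    exact this.congr (fun x => by rw [mul_one_div])
  have hQ : BL (fun y => max (1 - (clampf ν y/ν)^2) 0) := by
    have h2 : BL (fun y => (clampf ν y/ν)^2) := hdiv.pow 2
    exact ((BL.const 1).sub h2).max0
  have h1 : BL (fun y => 2 * |clampf ν y| * (max (1 - (clampf ν y/ν)^2) 0)^4) :=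
    ((BL.const 2).mul hA).mul (hQ.pow 4)
  have h2 : BL (fun y => 8/ν^2 * |clampf ν y|^3 * (max (1 - (clampf ν y/ν)^2) 0)^3) :=
    ((BL.const (8/ν^2)).mul (hA.pow 3)).mul (hQ.pow 3)
  exact (h1.sub h2).congr (fun y => (bder_eq_clamp hν y).symm)

lemma phiBump_nonneg (x : ℝ) : 0 ≤ phiBump x := by
  rw [phiBump_eq]; positivity

lemma phiBump_le_one (x : ℝ) : phiBump x ≤ 1 := by
  rw [phiBump_eq]
  rcases le_or_gt (1 - x^2) 0 with h | h
  · rw [max_eq_right h]; norm_num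
  · rw [max_eq_left h.le]
    exact pow_le_one₀ h.le (by nlinarith)

lemma bfun_bound {ν : ℝ} (hν : 0 < ν) (u : ℝ) : |u * |u| * phiBump (u/ν)| ≤ ν^2 := by
  rcases le_or_gt |u| ν with h | h
  · rw [abs_mul, abs_mul, abs_abs, abs_of_nonneg (phiBump_nonneg _)]
    calc |u| * |u| * phiBump (u/ν) ≤ ν * ν * 1 :=
        mul_le_mul (mul_le_mul h h (abs_nonneg _) hν.le) (phiBump_le_one _)
          (phiBump_nonneg _) (by positivity)
      _ = ν^2 := by ring
  · have : phiBump (u/ν) = 0 := by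
      rw [phiBump_eq, max_eq_zero_of_ge hν h.le, zero_pow (by norm_num)]
    rw [this, mul_zero, abs_zero]
    positivity

end Lemma41Aux

/-- Lemma 4.1(i): `G_{z,α,ν}` is differentiable with a Lipschitz continuous derivative
bounded below by a positive constant; in particular it has a Lipschitz continuous inverse. -/
theorem Gmap_differentiable_lipschitz_deriv_pos
    {k : ℕ} (hk : 0 < k) (z : Fin k → ℝ) (hz : StrictMono z) (α : Fin k → ℝ)
    (ν : ℝ) (hν : 0 < ν) (hν' : ENNReal.ofReal ν < rho z α) :
    Differentiable ℝ (Gmap z α ν) ∧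
    (∃ L : ℝ≥0, LipschitzWith L (deriv (Gmap z α ν))) ∧
    (∃ m : ℝ, 0 < m ∧ ∀ x, m ≤ deriv (Gmap z α ν) x) ∧
    Function.Bijective (Gmap z α ν) ∧
    ∃ L : ℝ≥0, LipschitzWith L (Function.invFun (Gmap z α ν)) := by
  classical
  -- consequences of `ν < ρ`
  have hν1 : ∀ i : Fin k, α i ≠ 0 → 8 * ν * |α i| < 1 := by
    intro i hi
    have h1 : ENNReal.ofReal ν <
        (if α i = 0 then ⊤ else ENNReal.ofReal (1 / (8 * |α i|))) :=
      lt_of_lt_of_le hν' (le_trans inf_le_left (iInf_le _ i))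
    rw [if_neg hi] at h1
    have h2 : ν < 1 / (8 * |α i|) :=
      (ENNReal.ofReal_lt_ofReal_iff_of_nonneg hν.le).mp h1
    have h3 : 0 < 8 * |α i| := by
      have := abs_pos.mpr hi; linarith
    have h4 := (lt_div_iff₀ h3).mp h2
    calc 8 * ν * |α i| = ν * (8 * |α i|) := by ring
      _ < 1 := h4
  have hν2 : ∀ i j : Fin k, (i : ℕ) + 1 = (j : ℕ) → 2 * ν < z j - z i := by
    intro i j hij
    have h1 : ENNReal.ofReal ν <
        (if (i : ℕ) + 1 = (j : ℕ) then ENNReal.ofReal ((z j - z i) / 2) else ⊤) :=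
      lt_of_lt_of_le hν' (le_trans inf_le_right (le_trans (iInf_le _ i) (iInf_le _ j)))
    rw [if_pos hij] at h1
    have h2 := (ENNReal.ofReal_lt_ofReal_iff_of_nonneg hν.le).mp h1
    linarith
  -- disjointness of the supports of the bumps
  have hdisj : ∀ (x : ℝ) (i j : Fin k), i ≠ j → |x - z i| < ν → ν ≤ |x - z j| := by
    have key : ∀ (x : ℝ) (a b : Fin k), (a : ℕ) < (b : ℕ) →
        |x - z a| < ν → |x - z b| < ν → False := by
      intro x a b hab ha hb
      have hb' : (a : ℕ) + 1 < k := lt_of_le_of_lt hab b.isLt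
      have h3 : 2 * ν < z ⟨(a : ℕ) + 1, hb'⟩ - z a := hν2 a ⟨(a : ℕ) + 1, hb'⟩ rfl
      have h4 : z ⟨(a : ℕ) + 1, hb'⟩ ≤ z b := by
        rcases eq_or_lt_of_le (show (a : ℕ) + 1 ≤ (b : ℕ) from hab) with he | hl
        · exact le_of_eq (congrArg z (Fin.ext he))
        · exact (hz (show (⟨(a : ℕ) + 1, hb'⟩ : Fin k) < b from hl)).le
      have h5 : z b - z a ≤ |x - z a| + |x - z b| := by
        calc z b - z a ≤ |(x - z a) - (x - z b)| := by
              rw [show (x - z a) - (x - z b) = z b - z a by ring]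
              exact le_abs_self _
          _ ≤ |x - z a| + |x - z b| := abs_sub _ _
      linarith
    intro x i j hij h1
    by_contra h2
    push_neg at h2
    rcases Fin.lt_or_lt_of_ne hij with hl | hl
    · exact key x i j hl h1 h2
    · exact key x j i hl h2 h1
  -- the maximal |α i|
  have hne : (Finset.univ : Finset (Fin k)).Nonempty := ⟨⟨0, hk⟩, Finset.mem_univ _⟩
  obtain ⟨i₁, -, hi₁⟩ := Finset.exists_mem_eq_sup' hne (fun i => |α i|)
  have hA_le : ∀ i, |α i| ≤ |α i₁| := fun i => by
    rw [← hi₁]; exact Finset.le_sup' (fun j => |α j|) (Finset.mem_univ i)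
  have hA0 : (0:ℝ) ≤ |α i₁| := abs_nonneg _
  have hm0 : 0 < 1 - 8 * ν * |α i₁| := by
    by_cases h0 : α i₁ = 0
    · rw [h0]; simp
    · linarith [hν1 i₁ h0]
  -- the derivative of Gmap
  have hG : ∀ x : ℝ, HasDerivAt (Gmap z α ν)
      (1 + ∑ i : Fin k, α i * bder ν (x - z i)) x := by
    intro x
    have hterm : ∀ i : Fin k, HasDerivAt
        (fun t : ℝ => α i * (t - z i) * |t - z i| * phiBump ((t - z i) / ν))
        (α i * bder ν (x - z i)) x := by
      intro i
      have hs : HasDerivAt (fun t : ℝ => t - z i) 1 x := (hasDerivAt_id x).sub_const _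
      have hb := ((hasDerivAt_bfun hν (x - z i)).comp x hs).const_mul (α i)
      have hb2 := hb.congr_of_eventuallyEq
        (Filter.Eventually.of_forall
          (fun t : ℝ => show α i * (t - z i) * |t - z i| * phiBump ((t - z i) / ν)
            = α i * (bfun ν ∘ fun t : ℝ => t - z i) t by
              simp only [Function.comp, bfun]; ring))
      simpa using hb2
    have hsum := HasDerivAt.fun_sum (fun i (_ : i ∈ Finset.univ) => hterm i)
    exact (hasDerivAt_id x).add hsum
  have hderiv : deriv (Gmap z α ν) =
      fun x => 1 + ∑ i : Fin k, α i * bder ν (x - z i) := funext fun x => (hG x).deriv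
  have hdiff : Differentiable ℝ (Gmap z α ν) := fun x => (hG x).differentiableAt
  -- lower bound for the derivative
  have hlow : ∀ x, 1 - 8 * ν * |α i₁| ≤ 1 + ∑ i : Fin k, α i * bder ν (x - z i) := by
    intro x
    have hsum : -(|α i₁| * (8 * ν)) ≤ ∑ i : Fin k, α i * bder ν (x - z i) := by
      by_cases hex : ∃ i : Fin k, |x - z i| < ν
      · obtain ⟨i₀, hi₀⟩ := hex
        rw [Finset.sum_eq_single i₀]
        · have h1 : |α i₀ * bder ν (x - z i₀)| ≤ |α i₁| * (8 * ν) := by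
            rw [abs_mul]
            exact mul_le_mul (hA_le i₀) (bder_bound hν _) (abs_nonneg _) hA0
          have h2 := neg_abs_le (α i₀ * bder ν (x - z i₀))
          linarith
        · intro b _ hb
          rw [bder_zero hν (hdisj x i₀ b (fun e => hb e.symm) hi₀), mul_zero]
        · intro h; exact absurd (Finset.mem_univ i₀) h
      · push_neg at hex
        rw [Finset.sum_eq_zero (fun i _ => by rw [bder_zero hν (hex i), mul_zero])]
        have : (0:ℝ) ≤ |α i₁| * (8 * ν) := by positivity
        linarith
    nlinarith [hsum]
  have hlow' : ∀ x, 1 - 8 * ν * |α i₁| ≤ deriv (Gmap z α ν) x := fun x => by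
    rw [hderiv]; exact hlow x
  -- strict monotonicity and bijectivity
  have hmono : StrictMono (Gmap z α ν) :=
    strictMono_of_deriv_pos (fun x => lt_of_lt_of_le hm0 (hlow' x))
  have hbnd : ∀ x, |Gmap z α ν x - x| ≤ (∑ i : Fin k, |α i|) * ν ^ 2 := by
    intro x
    have h1 : Gmap z α ν x - x
        = ∑ i : Fin k, α i * (x - z i) * |x - z i| * phiBump ((x - z i) / ν) := by
      unfold Gmap; ring
    rw [h1]
    calc |∑ i : Fin k, α i * (x - z i) * |x - z i| * phiBump ((x - z i) / ν)|
        ≤ ∑ i : Fin k, |α i * (x - z i) * |x - z i| * phiBump ((x - z i) / ν)| :=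
          Finset.abs_sum_le_sum_abs _ _
      _ ≤ ∑ i : Fin k, |α i| * ν ^ 2 := by
          refine Finset.sum_le_sum fun i _ => ?_
          have h2 : α i * (x - z i) * |x - z i| * phiBump ((x - z i) / ν)
              = α i * ((x - z i) * |x - z i| * phiBump ((x - z i) / ν)) := by ring
          rw [h2, abs_mul]
          exact mul_le_mul_of_nonneg_left (bfun_bound hν _) (abs_nonneg _)
      _ = (∑ i : Fin k, |α i|) * ν ^ 2 := by rw [Finset.sum_mul]
  have hsurj : Function.Surjective (Gmap z α ν) := by
    apply hdiff.continuous.surjective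
    · apply tendsto_atTop_mono (fun x => ?_)
        (tendsto_atTop_add_const_right _ (-((∑ i : Fin k, |α i|) * ν ^ 2)) tendsto_id)
      have := (abs_le.mp (hbnd x)).1
      simp only [id]
      linarith
    · apply tendsto_atBot_mono (fun x => ?_)
        (tendsto_atBot_add_const_right _ ((∑ i : Fin k, |α i|) * ν ^ 2) tendsto_id)
      have := (abs_le.mp (hbnd x)).2
      simp only [id]
      linarith
  -- inverse Lipschitz
  have hmon2 : Monotone (fun x => Gmap z α ν x - (1 - 8 * ν * |α i₁|) * x) := by
    apply monotone_of_deriv_nonneg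
    · intro x
      exact ((hG x).sub ((hasDerivAt_id x).const_mul _)).differentiableAt
    · intro x
      have hH : HasDerivAt (fun x => Gmap z α ν x - (1 - 8 * ν * |α i₁|) * x)
          ((1 + ∑ i : Fin k, α i * bder ν (x - z i)) - (1 - 8 * ν * |α i₁|) * 1) x :=
        (hG x).sub ((hasDerivAt_id x).const_mul _)
      rw [hH.deriv]
      have := hlow x
      linarith
  have hkey : ∀ x y : ℝ,
      (1 - 8 * ν * |α i₁|) * |x - y| ≤ |Gmap z α ν x - Gmap z α ν y| := by
    have key : ∀ x y : ℝ, x ≤ y →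
        (1 - 8 * ν * |α i₁|) * |x - y| ≤ |Gmap z α ν x - Gmap z α ν y| := by
      intro x y h
      have h1 := hmon2 h
      have h2 : Gmap z α ν x ≤ Gmap z α ν y := hmono.monotone h
      rw [abs_of_nonpos (by linarith : x - y ≤ 0),
        abs_of_nonpos (by linarith : Gmap z α ν x - Gmap z α ν y ≤ 0)]
      simp only at h1
      nlinarith [h1]
    intro x y
    rcases le_total x y with h | h
    · exact key x y h
    · rw [abs_sub_comm x y, abs_sub_comm (Gmap z α ν x)]
      exact key y x h
  refine ⟨hdiff, ?_, ⟨1 - 8 * ν * |α i₁|, hm0, hlow'⟩, ⟨hmono.injective, hsurj⟩, ?_⟩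
  · -- Lipschitz derivative
    obtain ⟨⟨K, hK0, hKl⟩, -⟩ := BL_bder (ν := ν) hν
    refine ⟨Real.toNNReal ((∑ i : Fin k, |α i|) * K), ?_⟩
    apply LipschitzWith.of_dist_le_mul
    intro x y
    rw [hderiv, Real.dist_eq, Real.dist_eq, Real.coe_toNNReal _ (by positivity)]
    have h1 : (1 + ∑ i : Fin k, α i * bder ν (x - z i))
        - (1 + ∑ i : Fin k, α i * bder ν (y - z i))
        = ∑ i : Fin k, (α i * bder ν (x - z i) - α i * bder ν (y - z i)) := by
      rw [Finset.sum_sub_distrib]; ring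
    rw [h1]
    calc |∑ i : Fin k, (α i * bder ν (x - z i) - α i * bder ν (y - z i))|
        ≤ ∑ i : Fin k, |α i * bder ν (x - z i) - α i * bder ν (y - z i)| :=
          Finset.abs_sum_le_sum_abs _ _
      _ ≤ ∑ i : Fin k, |α i| * (K * |x - y|) := by
          refine Finset.sum_le_sum fun i _ => ?_
          rw [← mul_sub, abs_mul]
          have h2 := hKl (x - z i) (y - z i)
          rw [show (x - z i) - (y - z i) = x - y by ring] at h2
          exact mul_le_mul_of_nonneg_left h2 (abs_nonneg _)
      _ = (∑ i : Fin k, |α i|) * K * |x - y| := by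
          rw [← Finset.sum_mul]; ring
  · -- Lipschitz inverse
    refine ⟨Real.toNNReal (1 / (1 - 8 * ν * |α i₁|)), ?_⟩
    apply LipschitzWith.of_dist_le_mul
    intro a b
    rw [Real.dist_eq, Real.dist_eq, Real.coe_toNNReal _ (one_div_nonneg.mpr hm0.le)]
    have ha := Function.rightInverse_invFun hsurj a
    have hb := Function.rightInverse_invFun hsurj b
    have h1 := hkey (Function.invFun (Gmap z α ν) a) (Function.invFun (Gmap z α ν) b)
    rw [ha, hb] at h1
    have h2 : |Function.invFun (Gmap z α ν) a - Function.invFun (Gmap z α ν) b|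
        * (1 - 8 * ν * |α i₁|) ≤ |a - b| := by nlinarith [h1]
    calc |Function.invFun (Gmap z α ν) a - Function.invFun (Gmap z α ν) b|
        ≤ |a - b| / (1 - 8 * ν * |α i₁|) := (le_div_iff₀ hm0).mpr h2
      _ = 1 / (1 - 8 * ν * |α i₁|) * |a - b| := by ring

end AdaptiveQM
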